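/- The 2×2 matrices over K defined by Tₐ = T_d = u·I₂, T_τ = [[−1, 1], [0, v]] and T_{τσ} = [[v, 0], [v, −1]] satisfy the defining relations of the generic Iwahori–Hecke algebra of type F₄ with parameters (u, v): T_d² = u·I₂ + (u−1)T_d, Tₐ² = u·I₂ + (u−1)Tₐ, T_τ² = v·I₂ + (v−1)T_τ, T_{τσ}² = v·I₂ + (v−1)T_{τσ}, T_d Tₐ T_d = Tₐ T_d Tₐ, T_τ T_{τσ} T_τ = T_{τσ} T_τ T_{τσ}, Tₐ T_τ Tₐ T_τ = T_τ Tₐ T_τ Tₐ, T_d T_τ = T_τ T_d, T_d T_{τσ} = T_{τσ} T_d, Tₐ T_{τσ} = T_{τσ} Tₐ. Moreover, the only K-subspaces of K² invariant under all four of these matrices are {0} and K², so the resulting two-dimensional representation σ of the generic Hecke algebra is irreducible. -/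
import Mathlib


open Matrix

/-- `K = ℚ(u, v)`, the field of rational functions in two commuting indeterminates
`u, v` over `ℚ`. -/
noncomputable abbrev KF4 : Type := FractionRing (MvPolynomial (Fin 2) ℚ)

/-- The indeterminate `u ∈ K = ℚ(u, v)`. -/
noncomputable def uF4 : KF4 := algebraMap (MvPolynomial (Fin 2) ℚ) KF4 (MvPolynomial.X 0)

/-- The indeterminate `v ∈ K = ℚ(u, v)`. -/
noncomputable def vF4 : KF4 := algebraMap (MvPolynomial (Fin 2) ℚ) KF4 (MvPolynomial.X 1)

lemma vF4_ne_zero : vF4 ≠ 0 := by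
  intro h
  rw [vF4, IsFractionRing.to_map_eq_zero_iff] at h
  have := congrArg (MvPolynomial.eval (fun _ => (1:ℚ))) h
  simp at this

lemma vF4_quad_ne_zero : vF4 ^ 2 + vF4 + 1 ≠ 0 := by
  intro h
  have e : vF4 ^ 2 + vF4 + 1 =
      algebraMap (MvPolynomial (Fin 2) ℚ) KF4 (MvPolynomial.X 1 ^ 2 + MvPolynomial.X 1 + 1) := by
    simp [vF4, map_add, map_pow]
  rw [e, IsFractionRing.to_map_eq_zero_iff] at h
  have := congrArg (MvPolynomial.eval (fun _ => (1:ℚ))) h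
  simp at this; norm_num at this

set_option maxHeartbeats 2000000 in
/-- If an invariant subspace contains a vector with nonzero second coordinate,
it is everything. -/
lemma f4_key (p : Submodule KF4 (Fin 2 → KF4))
    (ht : ∀ x ∈ p, (!![-1, 1; 0, vF4] : Matrix (Fin 2) (Fin 2) KF4).mulVec x ∈ p)
    (hts : ∀ x ∈ p, (!![vF4, 0; vF4, -1] : Matrix (Fin 2) (Fin 2) KF4).mulVec x ∈ p) :
    ∀ x ∈ p, x 1 ≠ 0 → p = ⊤ := by
  intro x hxp hb
  set a := x 0 with ha
  set b := x 1 with hbdef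
  have hxab : x = ![a, b] := by funext i; fin_cases i <;> rfl
  rw [hxab] at hxp
  have hyp : (![b, (vF4 + 1) * b] : Fin 2 → KF4) ∈ p := by
    have h1 : (!![-1, 1; 0, vF4] : Matrix (Fin 2) (Fin 2) KF4).mulVec ![a, b] + ![a, b]
        = ![b, (vF4 + 1) * b] := by
      funext i; fin_cases i <;>
        simp [Matrix.mulVec, dotProduct, Fin.sum_univ_two] <;> ring
    have := p.add_mem (ht _ hxp) hxp
    rwa [h1] at this
  have hzp : (![vF4 * b, -b] : Fin 2 → KF4) ∈ p := by
    have h1 : (!![vF4, 0; vF4, -1] : Matrix (Fin 2) (Fin 2) KF4).mulVec ![b, (vF4 + 1) * b]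
        = ![vF4 * b, -b] := by
      funext i; fin_cases i <;>
        simp [Matrix.mulVec, dotProduct, Fin.sum_univ_two] <;> ring
    have := hts _ hyp
    rwa [h1] at this
  have hc : (vF4 ^ 2 + vF4 + 1) * b ≠ 0 := mul_ne_zero vF4_quad_ne_zero hb
  have he1 : (![0, 1] : Fin 2 → KF4) ∈ p := by
    have hw : ((vF4 ^ 2 + vF4 + 1) * b)⁻¹ •
        (vF4 • (![b, (vF4 + 1) * b] : Fin 2 → KF4) - ![vF4 * b, -b]) = ![0, 1] := by
      have hq : (1 + vF4 + vF4 ^ 2 : KF4) ≠ 0 := by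
        intro h; apply vF4_quad_ne_zero; linear_combination h
      funext i; fin_cases i <;> simp [smul_eq_mul]
      linear_combination (vF4 * (1 + vF4 + vF4 ^ 2)⁻¹ + vF4 ^ 2 * (1 + vF4 + vF4 ^ 2)⁻¹ +
        (1 + vF4 + vF4 ^ 2)⁻¹) * mul_inv_cancel₀ hb + mul_inv_cancel₀ hq
    have := p.smul_mem (((vF4 ^ 2 + vF4 + 1) * b)⁻¹)
      (p.sub_mem (p.smul_mem vF4 hyp) hzp)
    rwa [hw] at this
  have he0 : (![1, 0] : Fin 2 → KF4) ∈ p := by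
    have hw : b⁻¹ • ((![b, (vF4 + 1) * b] : Fin 2 → KF4) - ((vF4 + 1) * b) • ![0, 1])
        = ![1, 0] := by
      funext i; fin_cases i <;> simp [smul_eq_mul]
      · exact inv_mul_cancel₀ hb
    have := p.smul_mem (b⁻¹) (p.sub_mem hyp (p.smul_mem ((vF4 + 1) * b) he1))
    rwa [hw] at this
  rw [Submodule.eq_top_iff']
  intro w
  have hwrep : w = w 0 • ![1, 0] + w 1 • ![0, 1] := by
    funext i; fin_cases i <;> simp
  rw [hwrep]
  exact p.add_mem (p.smul_mem _ he0) (p.smul_mem _ he1)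

set_option maxHeartbeats 2000000 in
/-- The `2×2` matrices `T_d = Tₐ = u·I₂`, `T_τ = [[−1, 1], [0, v]]`,
`T_{τσ} = [[v, 0], [v, −1]]` over `K = ℚ(u, v)` satisfy the defining relations of the
generic Iwahori–Hecke algebra of type `F₄` with parameters `(u, v)`, and the only
`K`-subspaces of `K²` invariant under all four matrices are `{0}` and `K²`; hence the
resulting two-dimensional representation `σ` (which specialises to Kondo's character
`2₁` under `(u,v) ↦ (1,1)`) is irreducible. -/
theorem f4_hecke_algebra_two_dim_rep_sigma :
    ∀ Td Ta Tt Tts : Matrix (Fin 2) (Fin 2) KF4,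
      Td = !![uF4, 0; 0, uF4] →
      Ta = !![uF4, 0; 0, uF4] →
      Tt = !![-1, 1; 0, vF4] →
      Tts = !![vF4, 0; vF4, -1] →
      (Td ^ 2 = uF4 • (1 : Matrix (Fin 2) (Fin 2) KF4) + (uF4 - 1) • Td ∧
       Ta ^ 2 = uF4 • (1 : Matrix (Fin 2) (Fin 2) KF4) + (uF4 - 1) • Ta ∧
       Tt ^ 2 = vF4 • (1 : Matrix (Fin 2) (Fin 2) KF4) + (vF4 - 1) • Tt ∧
       Tts ^ 2 = vF4 • (1 : Matrix (Fin 2) (Fin 2) KF4) + (vF4 - 1) • Tts ∧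
       Td * Ta * Td = Ta * Td * Ta ∧
       Tt * Tts * Tt = Tts * Tt * Tts ∧
       Ta * Tt * Ta * Tt = Tt * Ta * Tt * Ta ∧
       Td * Tt = Tt * Td ∧
       Td * Tts = Tts * Td ∧
       Ta * Tts = Tts * Ta) ∧
      (∀ p : Submodule KF4 (Fin 2 → KF4),
        (∀ x ∈ p, Td.mulVec x ∈ p) → (∀ x ∈ p, Ta.mulVec x ∈ p) →
        (∀ x ∈ p, Tt.mulVec x ∈ p) → (∀ x ∈ p, Tts.mulVec x ∈ p) →
        p = ⊥ ∨ p = ⊤) := by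
  intro Td Ta Tt Tts hTd hTa hTt hTts
  subst hTd hTa hTt hTts
  constructor
  · refine ⟨?_, ?_, ?_, ?_, ?_, ?_, ?_, ?_, ?_, ?_⟩ <;>
      (try rw [pow_two]) <;>
      simp only [Matrix.mul_fin_two, Matrix.one_fin_two] <;>
      (ext i j; fin_cases i <;> fin_cases j <;> simp <;> try ring)
  · intro p hd ha ht hts
    by_cases hbot : p = ⊥
    · exact Or.inl hbot
    right
    obtain ⟨x, hxp, hx0⟩ := Submodule.exists_mem_ne_zero_of_ne_bot hbot
    by_cases hb : x 1 ≠ 0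
    · exact f4_key p ht hts x hxp hb
    push_neg at hb
    have ha0 : x 0 ≠ 0 := by
      intro h0
      apply hx0
      funext i; fin_cases i <;> simp [h0, hb]
    have hxab : x = ![x 0, x 1] := by funext i; fin_cases i <;> rfl
    have h2 : ((!![vF4, 0; vF4, -1] : Matrix (Fin 2) (Fin 2) KF4).mulVec x) 1 ≠ 0 := by
      rw [hxab]
      simp [Matrix.mulVec, dotProduct, Fin.sum_univ_two, hb]
      exact ⟨vF4_ne_zero, ha0⟩
    exact f4_key p ht hts _ (hts x hxp) h2
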